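/- Given two globular groups G and H, define operations on the tensor product of abelian groups G ⊗ H by π_n^ε(g ⊗ h) = Σ_i (π_i^ε - π_{i-1}^ε)(g) ⊗ π_{n-i}^{(-1)^i ε}(h). Then these operations satisfy the globular relations, making G ⊗ H a globular group. -/

import Mathlib

open scoped TensorProduct

/-- The sign `(-1)^i ε`: `ε` if `i` is even, the opposite sign if `i` is odd. -/
def sflip (i : ℤ) (ε : Bool) : Bool := if Even i then ε else !ε

lemma sflip_pred (k : ℤ) (δ : Bool) : sflip k δ = sflip (k - 1) (!δ) := by
  unfold sflip
  by_cases h : Even k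
  · rw [if_pos h, if_neg (by rw [Int.even_sub_one]; exact not_not_intro h)]
    simp
  · rw [if_neg h, if_pos (Int.even_sub_one.mpr h)]

/-- Sum over `Icc 0 i` of a function supported on `{k-1, k}` (and on `Icc 0 i`). -/
lemma sum_Icc_support_pair {M : Type*} [AddCommGroup M] (i k : ℤ) (f : ℤ → M)
    (h1 : ∀ l, l ∉ Finset.Icc (0:ℤ) i → f l = 0)
    (h2 : ∀ l, l ≠ k - 1 → l ≠ k → f l = 0) :
    ∑ l ∈ Finset.Icc (0:ℤ) i, f l = f (k - 1) + f k := by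
  rw [Finset.sum_subset (Finset.subset_union_left :
      Finset.Icc (0:ℤ) i ⊆ Finset.Icc 0 i ∪ {k - 1, k}) (fun x _ hx => h1 x hx)]
  rw [← Finset.sum_subset (Finset.subset_union_right :
      ({k - 1, k} : Finset ℤ) ⊆ Finset.Icc 0 i ∪ {k - 1, k}) (fun x _ hx => by
        simp only [Finset.mem_insert, Finset.mem_singleton] at hx
        push_neg at hx
        exact h2 x hx.1 hx.2)]
  rw [Finset.sum_pair (by omega : k - 1 ≠ k)]

set_option maxHeartbeats 2000000 in
/-- Given globular groups `G` and `H`, the operations on `G ⊗ H` defined on elementary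
tensors by `π_n^ε (g ⊗ h) = Σ_i (π_i^ε - π_{i-1}^ε)(g) ⊗ π_{n-i}^{(-1)^i ε}(h)`
satisfy the globular relations, making `G ⊗ H` a globular group. -/
theorem tensor_of_globular_groups_is_globular
    {G H : Type*} [AddCommGroup G] [AddCommGroup H]
    (π : Bool → ℤ → G →+ G) (ρ : Bool → ℤ → H →+ H)
    (hπneg : ∀ (ε : Bool) (k : ℤ), k < 0 → π ε k = 0)
    (hρneg : ∀ (ε : Bool) (k : ℤ), k < 0 → ρ ε k = 0)
    (hπlt : ∀ (ε δ : Bool) (i j : ℤ), i < j → ∀ x, π ε i (π δ j x) = π ε i x)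
    (hπle : ∀ (ε δ : Bool) (i j : ℤ), j ≤ i → ∀ x, π ε i (π δ j x) = π δ j x)
    (hρlt : ∀ (ε δ : Bool) (i j : ℤ), i < j → ∀ y, ρ ε i (ρ δ j y) = ρ ε i y)
    (hρle : ∀ (ε δ : Bool) (i j : ℤ), j ≤ i → ∀ y, ρ ε i (ρ δ j y) = ρ δ j y)
    (hπar : ∀ x : G, ∃ n : ℤ, π true n x = x)
    (hρar : ∀ y : H, ∃ n : ℤ, ρ true n y = y)
    (πT : Bool → ℤ → G ⊗[ℤ] H → G ⊗[ℤ] H)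
    (hTadd : ∀ (ε : Bool) (n : ℤ) (a b : G ⊗[ℤ] H),
      πT ε n (a + b) = πT ε n a + πT ε n b)
    (hTdef : ∀ (ε : Bool) (n : ℤ) (g : G) (h : H),
      πT ε n (g ⊗ₜ[ℤ] h) =
        ∑ᶠ i : ℤ, (π ε i g - π ε (i - 1) g) ⊗ₜ[ℤ] ρ (sflip i ε) (n - i) h) :
    (∀ (ε δ : Bool) (i j : ℤ), i < j → ∀ t, πT ε i (πT δ j t) = πT ε i t) ∧
    (∀ (ε δ : Bool) (i j : ℤ), j ≤ i → ∀ t, πT ε i (πT δ j t) = πT δ j t) ∧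
    (∀ (ε : Bool) (k : ℤ), k < 0 → ∀ t, πT ε k t = 0) ∧
    (∀ t : G ⊗[ℤ] H, ∃ n : ℤ, πT true n t = t) := by
  -- πT maps 0 to 0
  have hzero : ∀ (ε : Bool) (n : ℤ), πT ε n 0 = 0 := by
    intro ε n
    have h := hTadd ε n 0 0
    rw [add_zero] at h
    exact (add_eq_right.mp h.symm)
  -- vanishing of the summands outside Icc 0 n
  have hvan : ∀ (ε : Bool) (n : ℤ) (g : G) (h : H) (i : ℤ), i ∉ Finset.Icc (0:ℤ) n →
      (π ε i g - π ε (i - 1) g) ⊗ₜ[ℤ] ρ (sflip i ε) (n - i) h = 0 := by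
    intro ε n g h i hi
    rw [Finset.mem_Icc] at hi
    by_cases h0 : i < 0
    · rw [hπneg ε i h0, hπneg ε (i - 1) (by omega)]
      simp
    · rw [hρneg _ (n - i) (by omega)]
      simp
  -- the defining formula as a finite sum
  have hT : ∀ (ε : Bool) (n : ℤ) (g : G) (h : H),
      πT ε n (g ⊗ₜ[ℤ] h) =
        ∑ i ∈ Finset.Icc (0:ℤ) n,
          (π ε i g - π ε (i - 1) g) ⊗ₜ[ℤ] ρ (sflip i ε) (n - i) h := by
    intro ε n g h
    rw [hTdef]
    apply finsum_eq_finset_sum_of_support_subset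
    rw [Function.support_subset_iff']
    intro i hi
    exact hvan ε n g h i (by simpa using hi)
  -- third claim
  have claim3 : ∀ (ε : Bool) (k : ℤ), k < 0 → ∀ t, πT ε k t = 0 := by
    intro ε k hk t
    induction t using TensorProduct.induction_on with
    | zero => exact hzero ε k
    | tmul g h => rw [hT, Finset.Icc_eq_empty (by omega), Finset.sum_empty]
    | add a b ha hb => rw [hTadd, ha, hb, add_zero]
  -- πT commutes with finite sums
  have hTsum : ∀ (ε : Bool) (n : ℤ) (s : Finset ℤ) (f : ℤ → G ⊗[ℤ] H),
      πT ε n (∑ k ∈ s, f k) = ∑ k ∈ s, πT ε n (f k) := by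
    intro ε n s f
    induction s using Finset.cons_induction with
    | empty => simpa using hzero ε n
    | cons a s ha ih => rw [Finset.sum_cons, hTadd, ih, Finset.sum_cons]
  -- the key computation on elementary tensors: composition as a sum of pair terms
  have hdouble : ∀ (ε δ : Bool) (i j : ℤ) (g : G) (h : H),
      πT ε i (πT δ j (g ⊗ₜ[ℤ] h)) =
        ∑ k ∈ Finset.Icc (0:ℤ) j,
          ((π ε (k - 1) g - π δ (k - 1) g) ⊗ₜ[ℤ]
              ρ (sflip (k - 1) ε) (i - (k - 1)) (ρ (sflip k δ) (j - k) h)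
            + (π δ k g - π ε (k - 1) g) ⊗ₜ[ℤ]
              ρ (sflip k ε) (i - k) (ρ (sflip k δ) (j - k) h)) := by
    intro ε δ i j g h
    rw [hT δ j g h, hTsum]
    refine Finset.sum_congr rfl ?_
    intro k _
    rw [hT ε i (π δ k g - π δ (k - 1) g) (ρ (sflip k δ) (j - k) h)]
    have hfac : ∀ l : ℤ, l ≠ k - 1 → l ≠ k →
        π ε l (π δ k g - π δ (k - 1) g) - π ε (l - 1) (π δ k g - π δ (k - 1) g) = 0 := by
      intro l hl1 hl2
      rw [map_sub, map_sub]
      rcases (by omega : l ≤ k - 2 ∨ k + 1 ≤ l) with hc | hc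
      · rw [hπlt ε δ l k (by omega), hπlt ε δ l (k - 1) (by omega),
          hπlt ε δ (l - 1) k (by omega), hπlt ε δ (l - 1) (k - 1) (by omega)]
        abel
      · rw [hπle ε δ l k (by omega), hπle ε δ l (k - 1) (by omega),
          hπle ε δ (l - 1) k (by omega), hπle ε δ (l - 1) (k - 1) (by omega)]
        abel
    rw [sum_Icc_support_pair i k _
      (fun l hl => hvan ε i _ _ l hl)
      (fun l hl1 hl2 => by rw [hfac l hl1 hl2]; simp)]
    congr 1
    · congr 1
      rw [map_sub, map_sub, hπlt ε δ (k - 1) k (by omega),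
        hπle ε δ (k - 1) (k - 1) le_rfl, hπlt ε δ (k - 1 - 1) k (by omega),
        hπlt ε δ (k - 1 - 1) (k - 1) (by omega)]
      abel
    · congr 1
      rw [map_sub, map_sub, hπle ε δ k k le_rfl, hπle ε δ k (k - 1) (by omega),
        hπlt ε δ (k - 1) k (by omega), hπle ε δ (k - 1) (k - 1) le_rfl]
      abel
  -- case j ≤ i on elementary tensors
  have key_le : ∀ (ε δ : Bool) (i j : ℤ), j ≤ i → ∀ (g : G) (h : H),
      πT ε i (πT δ j (g ⊗ₜ[ℤ] h)) = πT δ j (g ⊗ₜ[ℤ] h) := by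
    intro ε δ i j hji g h
    rw [hdouble, hT δ j g h]
    refine Finset.sum_congr rfl ?_
    intro k _
    rw [hρle _ _ _ _ (by omega : j - k ≤ i - (k - 1)),
      hρle _ _ _ _ (by omega : j - k ≤ i - k),
      ← TensorProduct.add_tmul,
      show (π ε (k - 1) g - π δ (k - 1) g) + (π δ k g - π ε (k - 1) g)
        = π δ k g - π δ (k - 1) g from by abel]
  -- case i < j on elementary tensors (for 0 ≤ i)
  have key_lt : ∀ (ε δ : Bool) (i j : ℤ), 0 ≤ i → i < j → ∀ (g : G) (h : H),
      πT ε i (πT δ j (g ⊗ₜ[ℤ] h)) = πT ε i (g ⊗ₜ[ℤ] h) := by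
    intro ε δ i j hi hij g h
    rw [hdouble]
    have hstep : ∀ k ∈ Finset.Icc (0:ℤ) j,
        ((π ε (k - 1) g - π δ (k - 1) g) ⊗ₜ[ℤ]
            ρ (sflip (k - 1) ε) (i - (k - 1)) (ρ (sflip k δ) (j - k) h)
          + (π δ k g - π ε (k - 1) g) ⊗ₜ[ℤ]
            ρ (sflip k ε) (i - k) (ρ (sflip k δ) (j - k) h))
        = ((π ε (k - 1) g - π δ (k - 1) g) ⊗ₜ[ℤ] ρ (sflip (k - 1) ε) (i - (k - 1)) h
          + (π δ k g - π ε (k - 1) g) ⊗ₜ[ℤ] ρ (sflip k ε) (i - k) h) := by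
      intro k _
      rw [hρlt _ _ _ _ (by omega : i - k < j - k)]
      congr 1
      by_cases hij' : i + 1 < j
      · rw [hρlt _ _ _ _ (by omega : i - (k - 1) < j - k)]
      · by_cases hed : ε = δ
        · subst hed
          rw [sub_self, TensorProduct.zero_tmul, TensorProduct.zero_tmul]
        · have hεδ : ε = !δ := by cases ε <;> cases δ <;> simp_all
          have hs : sflip (k - 1) ε = sflip k δ := by rw [hεδ, ← sflip_pred]
          rw [hρle _ _ _ _ (by omega : j - k ≤ i - (k - 1)), hs,
            show j - k = i - (k - 1) from by omega]
    rw [Finset.sum_congr rfl hstep, Finset.sum_add_distrib]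
    -- reindex the first sum
    have hA : ∑ k ∈ Finset.Icc (0:ℤ) j,
        (π ε (k - 1) g - π δ (k - 1) g) ⊗ₜ[ℤ] ρ (sflip (k - 1) ε) (i - (k - 1)) h
        = ∑ k ∈ Finset.Icc (0:ℤ) (j - 1),
          (π ε k g - π δ k g) ⊗ₜ[ℤ] ρ (sflip k ε) (i - k) h := by
      rw [show Finset.Icc (0:ℤ) j = (Finset.Icc (-1:ℤ) (j - 1)).map (addRightEmbedding 1)
        from by rw [Finset.map_add_right_Icc]; norm_num, Finset.sum_map]
      simp only [addRightEmbedding_apply, add_sub_cancel_right]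
      rw [show Finset.Icc (-1:ℤ) (j - 1) = insert (-1) (Finset.Icc 0 (j - 1)) from by
        ext x; simp only [Finset.mem_Icc, Finset.mem_insert]; omega]
      rw [Finset.sum_insert (by simp [Finset.mem_Icc])]
      rw [hπneg ε (-1) (by norm_num), hπneg δ (-1) (by norm_num)]
      simp
    have hB : ∑ k ∈ Finset.Icc (0:ℤ) j,
        (π ε k g - π δ k g) ⊗ₜ[ℤ] ρ (sflip k ε) (i - k) h
        = ∑ k ∈ Finset.Icc (0:ℤ) (j - 1),
          (π ε k g - π δ k g) ⊗ₜ[ℤ] ρ (sflip k ε) (i - k) h := by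
      rw [show Finset.Icc (0:ℤ) j = insert j (Finset.Icc 0 (j - 1)) from by
        ext x; simp only [Finset.mem_Icc, Finset.mem_insert]; omega]
      rw [Finset.sum_insert (by simp [Finset.mem_Icc])]
      rw [hρneg (sflip j ε) (i - j) (by omega)]
      simp
    have hre := hA.trans hB.symm
    rw [hre, ← Finset.sum_add_distrib, hT ε i g h]
    rw [show ∑ k ∈ Finset.Icc (0:ℤ) j,
        ((π ε k g - π δ k g) ⊗ₜ[ℤ] ρ (sflip k ε) (i - k) h
          + (π δ k g - π ε (k - 1) g) ⊗ₜ[ℤ] ρ (sflip k ε) (i - k) h)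
        = ∑ k ∈ Finset.Icc (0:ℤ) j,
          (π ε k g - π ε (k - 1) g) ⊗ₜ[ℤ] ρ (sflip k ε) (i - k) h from
      Finset.sum_congr rfl (fun k _ => by
        rw [← TensorProduct.add_tmul,
          show (π ε k g - π δ k g) + (π δ k g - π ε (k - 1) g)
            = π ε k g - π ε (k - 1) g from by abel])]
    exact (Finset.sum_subset (Finset.Icc_subset_Icc le_rfl (by omega))
      (fun x hx0 hx => by
        rw [Finset.mem_Icc] at hx0
        rw [Finset.mem_Icc] at hx
        rw [hρneg (sflip x ε) (i - x) (by omega)]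
        simp)).symm
  -- claim 2
  have claim2 : ∀ (ε δ : Bool) (i j : ℤ), j ≤ i → ∀ t, πT ε i (πT δ j t) = πT δ j t := by
    intro ε δ i j hji t
    induction t using TensorProduct.induction_on with
    | zero => rw [hzero δ j, hzero ε i]
    | tmul g h => exact key_le ε δ i j hji g h
    | add a b ha hb => rw [hTadd δ j, hTadd ε i, ha, hb]
  -- claim 1
  have claim1 : ∀ (ε δ : Bool) (i j : ℤ), i < j → ∀ t, πT ε i (πT δ j t) = πT ε i t := by
    intro ε δ i j hij t
    by_cases hi : 0 ≤ i
    · induction t using TensorProduct.induction_on with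
      | zero => rw [hzero δ j]
      | tmul g h => exact key_lt ε δ i j hi hij g h
      | add a b ha hb => rw [hTadd δ j, hTadd ε i, ha, hb, ← hTadd ε i]
    · rw [claim3 ε i (by omega), claim3 ε i (by omega)]
  -- upward closure of being fixed
  have hup : ∀ (n N : ℤ) (t : G ⊗[ℤ] H), n ≤ N → πT true n t = t → πT true N t = t := by
    intro n N t hle hfix
    calc πT true N t = πT true N (πT true n t) := by rw [hfix]
      _ = πT true n t := claim2 true true N n hle t
      _ = t := hfix
  -- telescoping sums
  have tele : ∀ (f : ℤ → G ⊗[ℤ] H) (m : ℤ), 0 ≤ m →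
      ∑ i ∈ Finset.Icc (0:ℤ) m, (f i - f (i - 1)) = f m - f (-1) := by
    intro f m hm
    refine Int.le_induction (motive := fun q _ => ∑ i ∈ Finset.Icc (0:ℤ) q, (f i - f (i - 1)) = f q - f (-1)) ?_ ?_ m hm
    · simp
    · intro n hn ih
      rw [show Finset.Icc (0:ℤ) (n + 1) = insert (n + 1) (Finset.Icc 0 n) from by
        ext x; simp only [Finset.mem_Icc, Finset.mem_insert]; omega]
      rw [Finset.sum_insert (by simp [Finset.mem_Icc]), ih, add_sub_cancel_right]
      abel
  -- claim 4 for elementary tensors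
  have claim4elem : ∀ (g : G) (h : H), ∃ n : ℤ, πT true n (g ⊗ₜ[ℤ] h) = g ⊗ₜ[ℤ] h := by
    intro g h
    obtain ⟨m₀, hm₀⟩ := hπar g
    obtain ⟨p₀, hp₀⟩ := hρar h
    set m := max m₀ 0 with hmdef
    set p := max p₀ 0 with hpdef
    have hgfix : ∀ q : ℤ, m₀ ≤ q → π true q g = g := by
      intro q hq
      calc π true q g = π true q (π true m₀ g) := by rw [hm₀]
        _ = π true m₀ g := hπle true true q m₀ hq g
        _ = g := hm₀
    have hhfix : ∀ (σ : Bool) (q : ℤ), p₀ ≤ q → ρ σ q h = h := by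
      intro σ q hq
      calc ρ σ q h = ρ σ q (ρ true p₀ h) := by rw [hp₀]
        _ = ρ true p₀ h := hρle σ true q p₀ hq h
        _ = h := hp₀
    refine ⟨m + p, ?_⟩
    rw [hT]
    have h1 : ∑ i ∈ Finset.Icc (0:ℤ) (m + p),
        (π true i g - π true (i - 1) g) ⊗ₜ[ℤ] ρ (sflip i true) (m + p - i) h
        = ∑ i ∈ Finset.Icc (0:ℤ) m,
          (π true i g - π true (i - 1) g) ⊗ₜ[ℤ] ρ (sflip i true) (m + p - i) h := by
      refine (Finset.sum_subset (Finset.Icc_subset_Icc le_rfl (by omega)) ?_).symm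
      intro x hx hx'
      rw [Finset.mem_Icc] at hx hx'
      rw [hgfix x (by omega), hgfix (x - 1) (by omega), sub_self, TensorProduct.zero_tmul]
    have h2 : ∑ i ∈ Finset.Icc (0:ℤ) m,
        (π true i g - π true (i - 1) g) ⊗ₜ[ℤ] ρ (sflip i true) (m + p - i) h
        = ∑ i ∈ Finset.Icc (0:ℤ) m,
          ((π true i g) ⊗ₜ[ℤ] h - (π true (i - 1) g) ⊗ₜ[ℤ] h) := by
      refine Finset.sum_congr rfl ?_
      intro x hx
      rw [Finset.mem_Icc] at hx
      rw [hhfix (sflip x true) (m + p - x) (by omega), TensorProduct.sub_tmul]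
    rw [h1, h2, tele (fun i => (π true i g) ⊗ₜ[ℤ] h) m (by omega)]
    rw [hπneg true (-1) (by norm_num)]
    simp only [AddMonoidHom.zero_apply, TensorProduct.zero_tmul, sub_zero]
    rw [hgfix m (le_max_left _ _)]
  -- claim 4
  have claim4 : ∀ t : G ⊗[ℤ] H, ∃ n : ℤ, πT true n t = t := by
    intro t
    induction t using TensorProduct.induction_on with
    | zero => exact ⟨0, hzero true 0⟩
    | tmul g h => exact claim4elem g h
    | add a b ha hb =>
      obtain ⟨n₁, h₁⟩ := ha
      obtain ⟨n₂, h₂⟩ := hb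
      exact ⟨max n₁ n₂, by
        rw [hTadd, hup n₁ (max n₁ n₂) a (le_max_left _ _) h₁,
          hup n₂ (max n₁ n₂) b (le_max_right _ _) h₂]⟩
  exact ⟨claim1, claim2, claim3, claim4⟩
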